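/- Let I be a nonempty subset of {1,…,n} and let k be a nonnegative integer. Then P( C_I(σ) ≥ k ) ≤ H(I)^k / k!. -/

import Mathlib

open Finset

/-- The number of cycles of length `j` in the permutation `σ` of `{1,…,n}`
(fixed points count as cycles of length 1): the number of points whose
orbit under `σ` has size `j`, divided by `j`. -/
noncomputable def cycleCount {n : ℕ} (σ : Equiv.Perm (Fin n)) (j : ℕ) : ℕ :=
  (Finset.univ.filter fun x => Function.minimalPeriod (⇑σ) x = j).card / j

/-- The number of cycles of `σ` whose length lies in the set `I`. -/
noncomputable def cycleCountIn {n : ℕ} (σ : Equiv.Perm (Fin n)) (I : Finset ℕ) : ℕ :=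
  ∑ j ∈ I, cycleCount σ j

/-- The total number of cycles of `σ` (fixed points included as 1-cycles). -/
noncomputable def totalCycles {n : ℕ} (σ : Equiv.Perm (Fin n)) : ℕ :=
  cycleCountIn σ (Finset.Icc 1 n)

/-- Probability of an event under a uniformly random permutation of `{1,…,n}`. -/
noncomputable def permP (n : ℕ) (E : Equiv.Perm (Fin n) → Prop) : ℝ :=
  (Nat.card {σ : Equiv.Perm (Fin n) // E σ} : ℝ) / n.factorial

/-- Expectation of `f` under a uniformly random permutation of `{1,…,n}`. -/
noncomputable def permE (n : ℕ) (f : Equiv.Perm (Fin n) → ℝ) : ℝ :=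
  (∑ σ : Equiv.Perm (Fin n), f σ) / n.factorial

/-- `H(I) = ∑_{j ∈ I} 1/j`. -/
noncomputable def Hset (I : Finset ℕ) : ℝ := ∑ j ∈ I, (1 : ℝ) / j

/-- The harmonic sum `H_n = ∑_{i=1}^n 1/i`. -/
noncomputable def harm (n : ℕ) : ℝ := Hset (Finset.Icc 1 n)

section TailBoundAux

open Function

variable {n : ℕ}

lemma perm_mem_periodicPts (σ : Equiv.Perm (Fin n)) (y : Fin n) : y ∈ periodicPts ⇑σ := by
  refine ⟨orderOf σ, orderOf_pos σ, ?_⟩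
  simp [IsPeriodicPt, IsFixedPt, pow_orderOf_eq_one σ]
  rw [Equiv.Perm.iterate_eq_pow, pow_orderOf_eq_one σ, Equiv.Perm.one_apply]

lemma perm_minPeriod_pos (σ : Equiv.Perm (Fin n)) (y : Fin n) :
    0 < minimalPeriod ⇑σ y :=
  minimalPeriod_pos_of_mem_periodicPts (perm_mem_periodicPts σ y)

lemma perm_pow_minPeriod (σ : Equiv.Perm (Fin n)) (y : Fin n) :
    (σ ^ minimalPeriod ⇑σ y) y = y := by
  exact isPeriodicPt_minimalPeriod ⇑σ y

lemma sameCycle_iff_exists_lt (σ : Equiv.Perm (Fin n)) (y z : Fin n) :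
    σ.SameCycle y z ↔ ∃ r < minimalPeriod ⇑σ y, (σ ^ r) y = z := by
  constructor
  · intro h
    obtain ⟨i, _, hi⟩ := h.exists_pow_eq'
    refine ⟨i % minimalPeriod ⇑σ y, Nat.mod_lt _ (perm_minPeriod_pos σ y), ?_⟩
    have h2 : (⇑σ)^[i % minimalPeriod ⇑σ y] y = (⇑σ)^[i] y :=
      iterate_mod_minimalPeriod_eq
    rw [Equiv.Perm.iterate_eq_pow, Equiv.Perm.iterate_eq_pow] at h2
    rw [h2]; exact hi
  · rintro ⟨r, _, hr⟩
    exact ⟨(r : ℤ), by simpa using hr⟩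

/-- The orbit (cycle) of `y` under `σ`, as a finset. -/
def orb (σ : Equiv.Perm (Fin n)) (y : Fin n) : Finset (Fin n) :=
  univ.filter fun z => σ.SameCycle y z

lemma mem_orb {σ : Equiv.Perm (Fin n)} {y z : Fin n} :
    z ∈ orb σ y ↔ σ.SameCycle y z := by simp [orb]

lemma orb_eq_of_sameCycle {σ : Equiv.Perm (Fin n)} {y z : Fin n}
    (h : σ.SameCycle y z) : orb σ y = orb σ z := by
  ext w; simp only [mem_orb]
  exact ⟨fun hw => h.symm.trans hw, fun hw => h.trans hw⟩

lemma orb_eq_iff {σ : Equiv.Perm (Fin n)} {y z : Fin n} :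
    orb σ y = orb σ z ↔ σ.SameCycle y z := by
  refine ⟨fun h => ?_, orb_eq_of_sameCycle⟩
  have : z ∈ orb σ y := h ▸ mem_orb.2 (Equiv.Perm.SameCycle.refl σ z)
  exact mem_orb.1 this

lemma orb_eq_image (σ : Equiv.Perm (Fin n)) (y : Fin n) :
    orb σ y = (range (minimalPeriod ⇑σ y)).image (fun r => (σ ^ r) y) := by
  ext z
  simp only [mem_orb, mem_image, mem_range, sameCycle_iff_exists_lt]

lemma card_orb (σ : Equiv.Perm (Fin n)) (y : Fin n) :
    (orb σ y).card = minimalPeriod ⇑σ y := by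
  have hinj : Set.InjOn (fun r => (σ ^ r) y) ↑(range (minimalPeriod ⇑σ y)) := by
    intro a ha b hb hab
    simp only [Finset.coe_range, Set.mem_Iio] at ha hb
    exact iterate_injOn_Iio_minimalPeriod ha hb (by simp only [Equiv.Perm.iterate_eq_pow]; simpa using hab)
  rw [orb_eq_image, Finset.card_image_of_injOn hinj, Finset.card_range]

lemma minPeriod_eq_of_sameCycle {σ : Equiv.Perm (Fin n)} {y z : Fin n}
    (h : σ.SameCycle y z) : minimalPeriod ⇑σ z = minimalPeriod ⇑σ y := by
  rw [← card_orb, ← card_orb, orb_eq_of_sameCycle h]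

lemma mem_orb_self (σ : Equiv.Perm (Fin n)) (y : Fin n) : y ∈ orb σ y :=
  mem_orb.2 (Equiv.Perm.SameCycle.refl σ y)

lemma card_filter_period_eq (σ : Equiv.Perm (Fin n)) (j : ℕ) :
    (univ.filter fun y => minimalPeriod ⇑σ y = j).card
      = j * (((univ.filter fun y => minimalPeriod ⇑σ y = j)).image (orb σ)).card := by
  classical
  set A := univ.filter fun y => minimalPeriod ⇑σ y = j with hA
  rw [Finset.card_eq_sum_card_fiberwise
    (f := fun y => orb σ y) (t := A.image (orb σ)) (fun y hy => mem_image_of_mem (orb σ) hy)]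
  rw [Finset.sum_congr rfl (g := fun _ => j), Finset.sum_const, smul_eq_mul, mul_comm]
  intro O hO
  obtain ⟨y₀, hy₀, rfl⟩ := mem_image.1 hO
  have hy₀' : minimalPeriod ⇑σ y₀ = j := by simpa [hA] using hy₀
  have hfib : A.filter (fun y => orb σ y = orb σ y₀) = orb σ y₀ := by
    ext z
    constructor
    · intro hz
      obtain ⟨-, h⟩ := Finset.mem_filter.1 hz
      exact mem_orb.2 (orb_eq_iff.1 h).symm
    · intro hz
      have hsc : σ.SameCycle y₀ z := mem_orb.1 hz
      refine Finset.mem_filter.2 ⟨?_, (orb_eq_of_sameCycle hsc).symm⟩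
      rw [hA]
      refine Finset.mem_filter.2 ⟨Finset.mem_univ _, ?_⟩
      rw [minPeriod_eq_of_sameCycle hsc, hy₀']
  rw [hfib, card_orb, hy₀']

lemma cycleCount_eq (σ : Equiv.Perm (Fin n)) (j : ℕ) (hj : j ≠ 0) :
    cycleCount σ j = (((univ.filter fun y => minimalPeriod ⇑σ y = j)).image (orb σ)).card := by
  rw [cycleCount, card_filter_period_eq, Nat.mul_div_cancel_left _ (Nat.pos_of_ne_zero hj)]

/-- The finset of cycles (orbits) of `σ` whose length lies in `I`. -/
noncomputable def CycI (σ : Equiv.Perm (Fin n)) (I : Finset ℕ) : Finset (Finset (Fin n)) :=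
  (univ.filter fun y => minimalPeriod ⇑σ y ∈ I).image (orb σ)

lemma cycleCountIn_eq_card (σ : Equiv.Perm (Fin n)) (I : Finset ℕ)
    (hI : ∀ j ∈ I, j ≠ 0) :
    cycleCountIn σ I = (CycI σ I).card := by
  classical
  have hsplit : (univ.filter fun y => minimalPeriod ⇑σ y ∈ I)
      = I.biUnion (fun j => univ.filter fun y => minimalPeriod ⇑σ y = j) := by
    ext y; simp
  rw [CycI, hsplit, Finset.biUnion_image, Finset.card_biUnion]
  · rw [cycleCountIn]
    exact Finset.sum_congr rfl fun j hj => cycleCount_eq σ j (hI j hj)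
  · intro j hj j' hj' hne
    simp only [Finset.disjoint_left]
    intro O hO hO'
    obtain ⟨y, hy, rfl⟩ := mem_image.1 hO
    obtain ⟨z, hz, hzo⟩ := mem_image.1 hO'
    have h1 : minimalPeriod ⇑σ y = j := by simpa using hy
    have h2 : minimalPeriod ⇑σ z = j' := by simpa using hz
    have : minimalPeriod ⇑σ z = minimalPeriod ⇑σ y :=
      minPeriod_eq_of_sameCycle (orb_eq_iff.1 hzo).symm
    exact hne (h1 ▸ h2 ▸ this.symm)

lemma card_injective_tuples {β : Type*} [DecidableEq β] (S : Finset β) (k : ℕ) :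
    ((Fintype.piFinset fun _ : Fin k => S).filter (fun x => Function.Injective x)).card
      = S.card.descFactorial k := by
  classical
  have h := Finset.card_bij'
    (s := (Fintype.piFinset fun _ : Fin k => S).filter (fun x => Function.Injective x))
    (t := (univ : Finset (Fin k ↪ ↥S)))
    (i := fun x hx => ⟨fun i => ⟨x i, by
        have := (Finset.mem_filter.1 hx).1
        exact Fintype.mem_piFinset.1 this i⟩, by
        intro a b hab
        exact (Finset.mem_filter.1 hx).2 (by simpa [Subtype.ext_iff] using hab)⟩)
    (j := fun e he => fun i => (e i : β))
    (hi := fun x hx => Finset.mem_univ _)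
    (hj := fun e he => by
      refine Finset.mem_filter.2 ⟨Fintype.mem_piFinset.2 fun i => (e i).2, ?_⟩
      intro a b hab
      exact e.injective (Subtype.ext hab))
    (left_inv := fun x hx => rfl)
    (right_inv := fun e he => by
      ext i
      rfl)
  rw [h, Finset.card_univ, Fintype.card_embedding_eq, Fintype.card_coe, Fintype.card_fin]

lemma mem_CycI_elim {σ : Equiv.Perm (Fin n)} {I : Finset ℕ} {O : Finset (Fin n)} {a : Fin n}
    (hO : O ∈ CycI σ I) (ha : a ∈ O) :
    orb σ a = O ∧ minimalPeriod ⇑σ a ∈ I ∧ O.card = minimalPeriod ⇑σ a := by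
  obtain ⟨y, hy, rfl⟩ := mem_image.1 hO
  have hyI : minimalPeriod ⇑σ y ∈ I := by simpa using hy
  have hsc : σ.SameCycle y a := mem_orb.1 ha
  have h1 : orb σ a = orb σ y := (orb_eq_of_sameCycle hsc).symm
  have h2 : minimalPeriod ⇑σ a = minimalPeriod ⇑σ y := minPeriod_eq_of_sameCycle hsc
  exact ⟨h1, h2 ▸ hyI, by rw [card_orb, h2]⟩

lemma moment_le (σ : Equiv.Perm (Fin n)) (I : Finset ℕ) (hI : ∀ j ∈ I, j ≠ 0) (k : ℕ) :
    (k.factorial * (cycleCountIn σ I).choose k : ℝ)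
      ≤ ∑ x ∈ (univ : Finset (Fin k → Fin n)).filter
            (fun x => (∀ i, minimalPeriod ⇑σ (x i) ∈ I) ∧
              ∀ i i', i ≠ i' → ¬σ.SameCycle (x i) (x i')),
          ∏ i, (1 : ℝ) / (minimalPeriod ⇑σ (x i)) := by
  classical
  set A := (univ : Finset (Fin k → Fin n)).filter
      (fun x => (∀ i, minimalPeriod ⇑σ (x i) ∈ I) ∧
        ∀ i i', i ≠ i' → ¬σ.SameCycle (x i) (x i')) with hA
  set T := (Fintype.piFinset fun _ : Fin k => CycI σ I).filter
      (fun O => Function.Injective O) with hT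
  have hmaps : ∀ x ∈ A, (fun i => orb σ (x i)) ∈ T := by
    intro x hx
    obtain ⟨-, h1, h2⟩ := Finset.mem_filter.1 hx
    refine Finset.mem_filter.2 ⟨Fintype.mem_piFinset.2 fun i => ?_, ?_⟩
    · exact mem_image.2 ⟨x i, by simpa using h1 i, rfl⟩
    · intro a b hab
      by_contra hne
      exact h2 a b hne (orb_eq_iff.1 hab)
  have hgroup := Finset.sum_fiberwise_of_maps_to hmaps
    (fun x => ∏ i, (1 : ℝ) / (minimalPeriod ⇑σ (x i)))
  rw [← hgroup]
  have hfib : ∀ O ∈ T, (∑ x ∈ A.filter (fun x => (fun i => orb σ (x i)) = O),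
      ∏ i, (1 : ℝ) / (minimalPeriod ⇑σ (x i))) = 1 := by
    intro O hO
    obtain ⟨hO1, hO2⟩ := Finset.mem_filter.1 hO
    have hO1' : ∀ i, O i ∈ CycI σ I := Fintype.mem_piFinset.1 hO1
    have hfeq : A.filter (fun x => (fun i => orb σ (x i)) = O)
        = Fintype.piFinset (fun i => O i) := by
      ext x
      constructor
      · intro hx
        obtain ⟨-, h⟩ := Finset.mem_filter.1 hx
        refine Fintype.mem_piFinset.2 fun i => ?_
        rw [← congrFun h i]
        exact mem_orb_self σ (x i)
      · intro hx
        have hx' : ∀ i, x i ∈ O i := Fintype.mem_piFinset.1 hx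
        have key : ∀ i, orb σ (x i) = O i ∧ minimalPeriod ⇑σ (x i) ∈ I :=
          fun i => ⟨(mem_CycI_elim (hO1' i) (hx' i)).1, (mem_CycI_elim (hO1' i) (hx' i)).2.1⟩
        refine Finset.mem_filter.2 ⟨Finset.mem_filter.2 ⟨Finset.mem_univ _,
          fun i => (key i).2, ?_⟩, funext fun i => (key i).1⟩
        intro i i' hne hsc
        exact hne (hO2 (by rw [← (key i).1, ← (key i').1, orb_eq_iff]; exact hsc))
    rw [hfeq]
    have hw : ∀ x ∈ Fintype.piFinset (fun i => O i),
        (∏ i, (1 : ℝ) / (minimalPeriod ⇑σ (x i))) = ∏ i, (1 : ℝ) / ((O i).card) := by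
      intro x hx
      refine Finset.prod_congr rfl fun i _ => ?_
      rw [(mem_CycI_elim (hO1' i) (Fintype.mem_piFinset.1 hx i)).2.2]
    rw [Finset.sum_congr rfl hw, Finset.sum_const, Fintype.card_piFinset,
      nsmul_eq_mul, Nat.cast_prod, ← Finset.prod_mul_distrib]
    refine Finset.prod_eq_one fun i _ => ?_
    have hcard : (O i).card ≠ 0 := by
      obtain ⟨y, hy, hyo⟩ := mem_image.1 (hO1' i)
      rw [← hyo, card_orb]
      exact (perm_minPeriod_pos σ y).ne'
    field_simp
  rw [Finset.sum_congr rfl hfib, Finset.sum_const, nsmul_eq_mul, mul_one, hT]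
  rw [card_injective_tuples, cycleCountIn_eq_card σ I hI,
    Nat.descFactorial_eq_factorial_mul_choose]
  push_cast
  exact le_refl _

section Splice

variable {k : ℕ}

/-- The listing map of the marked orbits. -/
def eFun (σ : Equiv.Perm (Fin n)) (x : Fin k → Fin n) (j : Fin k → ℕ) :
    (Σ i : Fin k, Fin (j i)) → Fin n :=
  fun q => (σ ^ (q.2 : ℕ)) (x q.1)

lemma eFun_injective {σ : Equiv.Perm (Fin n)} {x : Fin k → Fin n} {j : Fin k → ℕ}
    (h1 : ∀ i, minimalPeriod ⇑σ (x i) = j i)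
    (h2 : ∀ i i', i ≠ i' → ¬σ.SameCycle (x i) (x i')) :
    Function.Injective (eFun σ x j) := by
  rintro ⟨i, r⟩ ⟨i', r'⟩ hq
  simp only [eFun] at hq
  by_cases hii : i = i'
  · subst hii
    have hval : (r : ℕ) = (r' : ℕ) := by
      have hr : (r : ℕ) ∈ Set.Iio (minimalPeriod ⇑σ (x i)) := by rw [h1]; exact r.2
      have hr' : (r' : ℕ) ∈ Set.Iio (minimalPeriod ⇑σ (x i)) := by rw [h1]; exact r'.2
      exact iterate_injOn_Iio_minimalPeriod hr hr' (by simp only [Equiv.Perm.iterate_eq_pow]; simpa using hq)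
    exact congrArg _ (Fin.ext hval)
  · exfalso
    refine h2 i i' hii ?_
    have ha : σ.SameCycle (x i) ((σ ^ (r : ℕ)) (x i)) :=
      (Equiv.Perm.sameCycle_pow_right).2 (Equiv.Perm.SameCycle.refl σ (x i))
    rw [hq] at ha
    exact (Equiv.Perm.sameCycle_pow_right).1 ha

/-- The union of the marked orbits, as a finset. -/
noncomputable def Rng (σ : Equiv.Perm (Fin n)) (x : Fin k → Fin n) (j : Fin k → ℕ) :
    Finset (Fin n) :=
  Finset.image (eFun σ x j) univ

lemma card_compl_Rng {σ : Equiv.Perm (Fin n)} {x : Fin k → Fin n} {j : Fin k → ℕ}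
    (hinj : Function.Injective (eFun σ x j)) :
    (Rng σ x j)ᶜ.card = n - ∑ i, j i := by
  rw [Finset.card_compl, Rng, Finset.card_image_of_injective _ hinj]
  simp [Fintype.card_sigma]

lemma mem_Rng {σ : Equiv.Perm (Fin n)} {x : Fin k → Fin n} {j : Fin k → ℕ} {y : Fin n} :
    y ∈ Rng σ x j ↔ ∃ i : Fin k, ∃ r < j i, (σ ^ r) (x i) = y := by
  simp only [Rng, Finset.mem_image, Finset.mem_univ, true_and]
  constructor
  · rintro ⟨⟨i, r⟩, rfl⟩
    exact ⟨i, r, r.2, rfl⟩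
  · rintro ⟨i, r, hr, rfl⟩
    exact ⟨⟨i, ⟨r, hr⟩⟩, rfl⟩

lemma sigma_pos {σ : Equiv.Perm (Fin n)} {x : Fin k → Fin n} {j : Fin k → ℕ}
    (h1 : ∀ i, minimalPeriod ⇑σ (x i) = j i) (i : Fin k) : 0 < j i :=
  h1 i ▸ perm_minPeriod_pos σ (x i)

lemma pow_cycle_fix {σ : Equiv.Perm (Fin n)} {x : Fin k → Fin n} {j : Fin k → ℕ}
    (h1 : ∀ i, minimalPeriod ⇑σ (x i) = j i) (i : Fin k) : (σ ^ (j i)) (x i) = x i := by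
  rw [← h1 i]; exact perm_pow_minPeriod σ (x i)

/-- `σ` maps the complement of the orbit union into itself (contrapositive form). -/
lemma apply_mem_Rng {σ : Equiv.Perm (Fin n)} {x : Fin k → Fin n} {j : Fin k → ℕ}
    (h1 : ∀ i, minimalPeriod ⇑σ (x i) = j i) {y : Fin n}
    (h : σ y ∈ Rng σ x j) : y ∈ Rng σ x j := by
  obtain ⟨i, r, hr, hry⟩ := mem_Rng.1 h
  rcases Nat.eq_zero_or_pos r with h0 | hpos
  · subst h0
    refine mem_Rng.2 ⟨i, j i - 1, Nat.sub_lt (sigma_pos h1 i) one_pos, ?_⟩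
    have hfix := pow_cycle_fix h1 i
    have : (σ ^ (j i - 1 + 1)) (x i) = x i := by
      rwa [Nat.sub_add_cancel (sigma_pos h1 i)]
    rw [pow_succ'] at this
    simp only [Equiv.Perm.mul_apply] at this
    apply σ.injective
    rw [this]
    simpa using hry
  · refine mem_Rng.2 ⟨i, r - 1, lt_of_le_of_lt (Nat.sub_le _ _) hr, ?_⟩
    apply σ.injective
    have : (σ ^ (r - 1 + 1)) (x i) = σ y := by rwa [Nat.sub_add_cancel hpos]
    rw [pow_succ'] at this
    simpa using this

/-- A fixed equivalence used to lay out the spliced permutation. -/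
noncomputable def sumEq (n : ℕ) (j : Fin k → ℕ) (hmn : ∑ i, j i ≤ n) :
    ((Σ i : Fin k, Fin (j i)) ⊕ Fin (n - ∑ i, j i)) ≃ Fin n :=
  Fintype.equivOfCardEq (by
    simp [Fintype.card_sigma, Nat.add_sub_cancel' hmn])

/-- The spliced function recording all of `(σ, x)`. -/
noncomputable def tau (σ : Equiv.Perm (Fin n)) (x : Fin k → Fin n) (j : Fin k → ℕ)
    (hmn : ∑ i, j i ≤ n) (hinj : Function.Injective (eFun σ x j)) :
    Fin n → Fin n :=
  fun t =>
    Sum.elim (eFun σ x j)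
      (fun t' => σ ((Rng σ x j)ᶜ.orderEmbOfFin (card_compl_Rng hinj) t'))
      ((sumEq n j hmn).symm t)

end Splice

section Splice2

variable {k : ℕ}

lemma tau_injective {σ : Equiv.Perm (Fin n)} {x : Fin k → Fin n} {j : Fin k → ℕ}
    (h1 : ∀ i, minimalPeriod ⇑σ (x i) = j i)
    (hmn : ∑ i, j i ≤ n) (hinj : Function.Injective (eFun σ x j)) :
    Function.Injective (tau σ x j hmn hinj) := by
  have hcmem : ∀ t', ((Rng σ x j)ᶜ.orderEmbOfFin (card_compl_Rng hinj) t') ∉ Rng σ x j := by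
    intro t'
    have h := Finset.orderEmbOfFin_mem ((Rng σ x j)ᶜ) (card_compl_Rng hinj) t'
    exact Finset.mem_compl.1 h
  have hmix : ∀ (q : Σ i : Fin k, Fin (j i)) t',
      eFun σ x j q ≠ σ ((Rng σ x j)ᶜ.orderEmbOfFin (card_compl_Rng hinj) t') := by
    intro q t' h
    apply hcmem t'
    apply apply_mem_Rng h1
    rw [← h]
    exact Finset.mem_image_of_mem _ (Finset.mem_univ q)
  have helim : Function.Injective (Sum.elim (eFun σ x j)
      (fun t' => σ ((Rng σ x j)ᶜ.orderEmbOfFin (card_compl_Rng hinj) t'))) := by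
    rintro (q | t) (q' | t') h <;> simp only [Sum.elim_inl, Sum.elim_inr] at h
    · exact congrArg Sum.inl (hinj h)
    · exact absurd h (hmix q t')
    · exact absurd h.symm (hmix q' t)
    · have h2 := σ.injective h
      exact congrArg Sum.inr (((Rng σ x j)ᶜ.orderEmbOfFin (card_compl_Rng hinj)).injective h2)
  intro a b h
  have h' : (sumEq n j hmn).symm a = (sumEq n j hmn).symm b := helim h
  exact (sumEq n j hmn).symm.injective h'

lemma tau_determines {σ σ' : Equiv.Perm (Fin n)} {x x' : Fin k → Fin n} {j : Fin k → ℕ}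
    (h1 : ∀ i, minimalPeriod ⇑σ (x i) = j i)
    (h1' : ∀ i, minimalPeriod ⇑σ' (x' i) = j i)
    (hmn : ∑ i, j i ≤ n)
    (hinj : Function.Injective (eFun σ x j))
    (hinj' : Function.Injective (eFun σ' x' j))
    (heq : tau σ x j hmn hinj = tau σ' x' j hmn hinj') : σ = σ' ∧ x = x' := by
  have helim : ∀ z, Sum.elim (eFun σ x j)
      (fun t' => σ ((Rng σ x j)ᶜ.orderEmbOfFin (card_compl_Rng hinj) t')) z
      = Sum.elim (eFun σ' x' j)
      (fun t' => σ' ((Rng σ' x' j)ᶜ.orderEmbOfFin (card_compl_Rng hinj') t')) z := by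
    intro z
    have h := congrFun heq ((sumEq n j hmn) z)
    simpa [tau] using h
  have he : eFun σ x j = eFun σ' x' j := funext fun q => helim (Sum.inl q)
  have hx : x = x' := by
    funext i
    have h := congrFun he ⟨i, ⟨0, sigma_pos h1 i⟩⟩
    simpa [eFun] using h
  have hR : Rng σ x j = Rng σ' x' j := by rw [Rng, Rng, he]
  have hee : ∀ (i : Fin k) (r : ℕ), r < j i → (σ ^ r) (x i) = (σ' ^ r) (x' i) := by
    intro i r hr
    have h := congrFun he ⟨i, ⟨r, hr⟩⟩
    simpa [eFun] using h
  refine ⟨?_, hx⟩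
  refine Equiv.ext fun y => ?_
  by_cases hy : y ∈ Rng σ x j
  · obtain ⟨i, r, hr, rfl⟩ := mem_Rng.1 hy
    have hstep : σ ((σ ^ r) (x i)) = (σ ^ (r + 1)) (x i) := by
      rw [pow_succ']; simp [Equiv.Perm.mul_apply]
    have hstep' : σ' ((σ' ^ r) (x' i)) = (σ' ^ (r + 1)) (x' i) := by
      rw [pow_succ']; simp [Equiv.Perm.mul_apply]
    rcases Nat.lt_or_ge (r + 1) (j i) with hlt | hge
    · have hL : σ ((σ ^ r) (x i)) = (σ ^ (r + 1)) (x i) := hstep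
      have hRH : σ' ((σ ^ r) (x i)) = (σ' ^ (r + 1)) (x' i) := by
        rw [hee i r hr]; exact hstep'
      rw [hL, hRH, hee i (r + 1) hlt]
    · have hjr : r + 1 = j i := by omega
      have hL : σ ((σ ^ r) (x i)) = x i := by
        rw [hstep, hjr, pow_cycle_fix h1 i]
      have hRH : σ' ((σ ^ r) (x i)) = x' i := by
        rw [hee i r hr, hstep', hjr, pow_cycle_fix h1' i]
      rw [hL, hRH, hx]
  · have hy' : y ∈ (Rng σ x j)ᶜ := Finset.mem_compl.2 hy
    have hrange : y ∈ Set.range ((Rng σ x j)ᶜ.orderEmbOfFin (card_compl_Rng hinj)) := by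
      rw [Finset.range_orderEmbOfFin]
      exact_mod_cast hy'
    obtain ⟨t, ht⟩ := hrange
    have h2 := helim (Sum.inr t)
    simp only [Sum.elim_inr] at h2
    simp only [← hR] at h2
    rw [ht] at h2
    exact h2

end Splice2

lemma card_pairs_le (k : ℕ) (j : Fin k → ℕ) :
    ((univ : Finset (Equiv.Perm (Fin n) × (Fin k → Fin n))).filter
      (fun p : Equiv.Perm (Fin n) × (Fin k → Fin n) =>
        (∀ i, minimalPeriod ⇑p.1 (p.2 i) = j i) ∧
        ∀ i i', i ≠ i' → ¬p.1.SameCycle (p.2 i) (p.2 i'))).card ≤ n.factorial := by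
  classical
  by_cases hmn : ∑ i, j i ≤ n
  · set T0 := (univ : Finset (Fin n → Fin n)).filter (fun f => Function.Injective f) with hT0d
    have hT0 : T0.card = n.factorial := by
      have h := card_injective_tuples (univ : Finset (Fin n)) n
      rw [Fintype.piFinset_univ] at h
      rw [hT0d, h, Finset.card_univ, Fintype.card_fin, Nat.descFactorial_self]
    refine le_trans (Finset.card_le_card_of_injOn
      (fun p : Equiv.Perm (Fin n) × (Fin k → Fin n) =>
        if h : (∀ i, minimalPeriod ⇑p.1 (p.2 i) = j i) ∧
          (∀ i i', i ≠ i' → ¬p.1.SameCycle (p.2 i) (p.2 i'))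
        then tau p.1 p.2 j hmn (eFun_injective h.1 h.2) else id) ?_ ?_) (le_of_eq hT0)
    · intro p hp
      have hc := (Finset.mem_filter.1 hp).2
      dsimp only
      rw [dif_pos hc]
      exact Finset.mem_filter.2 ⟨Finset.mem_univ _, tau_injective hc.1 hmn _⟩
    · intro p hp p' hp' hfe
      have hc := (Finset.mem_filter.1 hp).2
      have hc' := (Finset.mem_filter.1 hp').2
      dsimp only at hfe
      rw [dif_pos hc, dif_pos hc'] at hfe
      obtain ⟨hσ, hx⟩ := tau_determines hc.1 hc'.1 hmn _ _ hfe
      exact Prod.ext hσ hx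
  · have hempty : ((univ : Finset (Equiv.Perm (Fin n) × (Fin k → Fin n))).filter
        (fun p : Equiv.Perm (Fin n) × (Fin k → Fin n) =>
          (∀ i, minimalPeriod ⇑p.1 (p.2 i) = j i) ∧
          ∀ i i', i ≠ i' → ¬p.1.SameCycle (p.2 i) (p.2 i'))) = ∅ := by
      refine Finset.filter_eq_empty_iff.2 fun {p} _ => ?_
      rintro ⟨hA, hB⟩
      apply hmn
      have h := Fintype.card_le_of_injective _ (eFun_injective hA hB)
      simpa [Fintype.card_sigma] using h
    rw [hempty]
    simp

lemma markov_count (I : Finset ℕ) (k : ℕ) :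
    (((univ : Finset (Equiv.Perm (Fin n))).filter
      (fun σ => k ≤ cycleCountIn σ I)).card : ℝ)
      ≤ ∑ σ : Equiv.Perm (Fin n), ((cycleCountIn σ I).choose k : ℝ) := by
  classical
  rw [← Finset.sum_boole]
  refine Finset.sum_le_sum fun σ _ => ?_
  by_cases h : k ≤ cycleCountIn σ I
  · simp only [h, if_pos]
    exact_mod_cast Nat.one_le_iff_ne_zero.2 (Nat.choose_pos h).ne'
  · simp [h]

/-- The tuple of cycle lengths marked by a pair. -/
noncomputable def Jmap {n : ℕ} (k : ℕ) (p : Equiv.Perm (Fin n) × (Fin k → Fin n)) : Fin k → ℕ :=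
  fun i => minimalPeriod ⇑p.1 (p.2 i)

lemma sum_choose_le (I : Finset ℕ) (hI : ∀ j ∈ I, j ≠ 0) (k : ℕ) :
    (k.factorial : ℝ) * ∑ σ : Equiv.Perm (Fin n), ((cycleCountIn σ I).choose k : ℝ)
      ≤ (n.factorial : ℝ) * (∑ j ∈ I, (1 : ℝ) / j) ^ k := by
  classical
  set P : Equiv.Perm (Fin n) × (Fin k → Fin n) → Prop := fun p =>
    (∀ i, minimalPeriod ⇑p.1 (p.2 i) ∈ I) ∧
      ∀ i i', i ≠ i' → ¬p.1.SameCycle (p.2 i) (p.2 i') with hP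
  set w : Equiv.Perm (Fin n) × (Fin k → Fin n) → ℝ := fun p =>
    ∏ i, (1 : ℝ) / (minimalPeriod ⇑p.1 (p.2 i)) with hw
  have step1 : (k.factorial : ℝ) * ∑ σ : Equiv.Perm (Fin n), ((cycleCountIn σ I).choose k : ℝ)
      ≤ ∑ p ∈ (univ : Finset (Equiv.Perm (Fin n) × (Fin k → Fin n))).filter P, w p := by
    rw [Finset.mul_sum]
    have hsum : ∑ p ∈ (univ : Finset (Equiv.Perm (Fin n) × (Fin k → Fin n))).filter P, w p
        = ∑ σ : Equiv.Perm (Fin n), ∑ x ∈ (univ : Finset (Fin k → Fin n)).filter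
            (fun x => (∀ i, minimalPeriod ⇑σ (x i) ∈ I) ∧
              ∀ i i', i ≠ i' → ¬σ.SameCycle (x i) (x i')),
            ∏ i, (1 : ℝ) / (minimalPeriod ⇑σ (x i)) := by
      rw [Finset.sum_filter, Fintype.sum_prod_type]
      refine Finset.sum_congr rfl fun σ _ => ?_
      rw [Finset.sum_filter]
    rw [hsum]
    refine Finset.sum_le_sum fun σ _ => ?_
    exact moment_le σ I hI k
  refine step1.trans ?_
  have hmaps : ∀ p ∈ (univ : Finset (Equiv.Perm (Fin n) × (Fin k → Fin n))).filter P,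
      Jmap k p ∈ Fintype.piFinset (fun _ : Fin k => I) := by
    intro p hp
    exact Fintype.mem_piFinset.2 fun i => ((Finset.mem_filter.1 hp).2).1 i
  rw [← Finset.sum_fiberwise_of_maps_to hmaps w]
  have hbound : ∀ j ∈ Fintype.piFinset (fun _ : Fin k => I),
      (∑ p ∈ ((univ : Finset (Equiv.Perm (Fin n) × (Fin k → Fin n))).filter P).filter
        (fun p => Jmap k p = j), w p)
      ≤ (n.factorial : ℝ) * ∏ i, (1 : ℝ) / (j i) := by
    intro j hj
    have hwj : ∀ p ∈ ((univ : Finset (Equiv.Perm (Fin n) × (Fin k → Fin n))).filter P).filter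
        (fun p => Jmap k p = j), w p = ∏ i, (1 : ℝ) / (j i) := by
      intro p hp
      have hjp := (Finset.mem_filter.1 hp).2
      rw [hw]
      exact Finset.prod_congr rfl fun i _ => by rw [← congrFun hjp i]; rfl
    rw [Finset.sum_congr rfl hwj, Finset.sum_const, nsmul_eq_mul]
    have hsubset : ((univ : Finset (Equiv.Perm (Fin n) × (Fin k → Fin n))).filter P).filter
        (fun p => Jmap k p = j)
        ⊆ (univ : Finset (Equiv.Perm (Fin n) × (Fin k → Fin n))).filter
          (fun p : Equiv.Perm (Fin n) × (Fin k → Fin n) =>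
            (∀ i, minimalPeriod ⇑p.1 (p.2 i) = j i) ∧
              ∀ i i', i ≠ i' → ¬p.1.SameCycle (p.2 i) (p.2 i')) := by
      intro p hp
      obtain ⟨hp1, hp2⟩ := Finset.mem_filter.1 hp
      obtain ⟨-, hP1, hP2⟩ := Finset.mem_filter.1 hp1
      exact Finset.mem_filter.2 ⟨Finset.mem_univ _, fun i => congrFun hp2 i, hP2⟩
    have hcard := le_trans (Finset.card_le_card hsubset) (card_pairs_le k j)
    have hprodpos : (0 : ℝ) ≤ ∏ i, (1 : ℝ) / (j i) :=
      Finset.prod_nonneg fun i _ => by positivity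
    exact mul_le_mul_of_nonneg_right (by exact_mod_cast hcard) hprodpos
  refine (Finset.sum_le_sum hbound).trans ?_
  rw [← Finset.mul_sum]
  have hps : ∑ j ∈ Fintype.piFinset (fun _ : Fin k => I), ∏ i, (1 : ℝ) / (j i)
      = (∑ a ∈ I, (1 : ℝ) / a) ^ k := by
    rw [← Finset.prod_univ_sum (fun _ : Fin k => I) (fun _ a => (1 : ℝ) / a)]
    simp [Finset.prod_const]
  rw [hps]


end TailBoundAux

/-- For a nonempty `I ⊆ [n]` and `k ≥ 0`, `P(C_I(σ) ≥ k) ≤ H(I)^k / k!`. -/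
theorem tail_bound_factorial (n : ℕ) (I : Finset ℕ) (hne : I.Nonempty)
    (hsub : I ⊆ Finset.Icc 1 n) (k : ℕ) :
    permP n (fun σ => k ≤ cycleCountIn σ I) ≤ Hset I ^ k / k.factorial := by
  simp only [Hset]
  classical
  have hI : ∀ j ∈ I, j ≠ 0 := fun j hj => by
    have := (Finset.mem_Icc.1 (hsub hj)).1; omega
  have hcard : (Nat.card {σ : Equiv.Perm (Fin n) // k ≤ cycleCountIn σ I} : ℕ)
      = ((univ.filter fun σ : Equiv.Perm (Fin n) => k ≤ cycleCountIn σ I).card : ℕ) := by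
    rw [Nat.card_eq_fintype_card, Fintype.card_subtype]
  rw [permP, hcard]
  have h1 := markov_count (n := n) I k
  have h2 := sum_choose_le (n := n) I hI k
  have hk : (0 : ℝ) < k.factorial := by exact_mod_cast k.factorial_pos
  have hn : (0 : ℝ) < n.factorial := by exact_mod_cast n.factorial_pos
  have h3 : ∑ σ : Equiv.Perm (Fin n), ((cycleCountIn σ I).choose k : ℝ)
      ≤ (n.factorial : ℝ) * (∑ j ∈ I, (1 : ℝ) / j) ^ k / k.factorial := by
    rw [le_div_iff₀ hk]
    linarith
  have h4 : ((univ.filter fun σ : Equiv.Perm (Fin n) => k ≤ cycleCountIn σ I).card : ℝ)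
      ≤ (n.factorial : ℝ) * (∑ j ∈ I, (1 : ℝ) / j) ^ k / k.factorial := h1.trans h3
  rw [div_le_iff₀ hn]
  calc ((univ.filter fun σ : Equiv.Perm (Fin n) => k ≤ cycleCountIn σ I).card : ℝ)
      ≤ (n.factorial : ℝ) * (∑ j ∈ I, (1 : ℝ) / j) ^ k / k.factorial := h4
    _ = (∑ j ∈ I, (1 : ℝ) / j) ^ k / k.factorial * n.factorial := by
        field_simp
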